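/- Let 𝕂 be an integral domain containing 𝔽_r, and suppose to each a ∈ A₊ with deg a = d is assigned a unit [a] ∈ 𝕂^× such that [a+b] = [a] + [b] and [εa] = ε[a] for ε ∈ 𝔽_r (for a, b ranging over polynomials of degree < d₀). Then for positive integers r₁, s₁ and 0 ≤ d < d₀, Σ_{a ∈ A₊,d} [a]^{−r₁} · Σ_{b ∈ A₊,d} [b]^{−s₁} = Σ_{a ∈ A₊,d} [a]^{−(r₁+s₁)} + Σ_{i+j = r₁+s₁} Δ^{i,j}_{r₁,s₁} Σ_{a ∈ A₊,d, f ∈ A₊,<d} [a]^{−i}[f]^{−j}, where Δ^{i,j}_{r₁,s₁} = (−1)^{r₁−1} C(j−1, r₁−1) + (−1)^{s₁−1} C(j−1, s₁−1) if (r−1) | j and j > 0, and 0 otherwise (binomials mod p). -/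

import Mathlib

open Polynomial

section PF
variable {K : Type*} [Field K]

/-- Coefficient in the partial fraction expansion. -/
noncomputable def pfC (x y : K) (r s j : ℕ) : K :=
  (-1 : K) ^ s * (Nat.choose (j-1) (s-1) : K) * x⁻¹ ^ (r+s-j)
  + (-1 : K) ^ (j+r) * (Nat.choose (j-1) (r-1) : K) * y⁻¹ ^ (r+s-j)

lemma chtop {a b : ℕ} (h : a ≤ b) : Nat.choose a b = if a = b then 1 else 0 := by
  rcases eq_or_lt_of_le h with rfl | h
  · simp
  · simp [Nat.choose_eq_zero_of_lt h, Nat.ne_of_lt h]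

theorem pfrac {x y : K} (hx : x ≠ 0) (hy : y ≠ 0) (hxy : x ≠ y) :
    ∀ n r s : ℕ, r + s = n → 1 ≤ r → 1 ≤ s →
    x⁻¹ ^ r * y⁻¹ ^ s = ∑ j ∈ Finset.Icc 1 (r+s-1), (x-y)⁻¹ ^ j * pfC x y r s j := by
  have hz : x - y ≠ 0 := sub_ne_zero.mpr hxy
  have key : ∀ r' s' : ℕ, x⁻¹ ^ (r'+1) * y⁻¹ ^ (s'+1)
      = (x-y)⁻¹ * (x⁻¹ ^ r' * y⁻¹ ^ (s'+1)) - (x-y)⁻¹ * (x⁻¹ ^ (r'+1) * y⁻¹ ^ s') := by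
    intro r' s'
    have base : x⁻¹ * y⁻¹ = (x-y)⁻¹ * y⁻¹ - (x-y)⁻¹ * x⁻¹ := by
      field_simp
    have e : x⁻¹ ^ (r'+1) * y⁻¹ ^ (s'+1) = (x⁻¹ ^ r' * y⁻¹ ^ s') * (x⁻¹ * y⁻¹) := by ring
    rw [e, base]; ring
  have shift : ∀ (m : ℕ) (g : ℕ → K),
      (x-y)⁻¹ * ∑ j ∈ Finset.Icc 1 m, (x-y)⁻¹ ^ j * g j
        = ∑ j ∈ Finset.Icc 2 (m+1), (x-y)⁻¹ ^ j * g (j-1) := by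
    intro m g
    rw [Finset.mul_sum]
    refine Finset.sum_nbij' (i := fun j => j + 1) (j := fun j => j - 1) ?_ ?_ ?_ ?_ ?_
    · intro a ha; simp only [Finset.mem_Icc] at *; omega
    · intro a ha; simp only [Finset.mem_Icc] at *; omega
    · intro a ha; show a + 1 - 1 = a; omega
    · intro a ha; simp only [Finset.mem_Icc] at ha; show a - 1 + 1 = a; omega
    · intro a ha; simp only [Nat.add_sub_cancel]; ring
  intro n
  induction n with
  | zero => intro r s h hr hs; omega
  | succ n IH =>
    intro r s h hr hs
    match r, hr with
    | R + 1, _ =>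
    match s, hs with
    | S + 1, _ =>
    rcases Nat.eq_zero_or_pos R with rfl | hR <;> rcases Nat.eq_zero_or_pos S with rfl | hS
    · -- base case r = s = 1
      simp only [Nat.add_sub_cancel, Finset.Icc_self, Finset.sum_singleton, pfC]
      norm_num
      field_simp
      ring
    · -- r = 1, s = S+1, S ≥ 1
      obtain ⟨S', rfl⟩ : ∃ S', S = S' + 1 := ⟨S - 1, by omega⟩
      have e1 := key 0 (S' + 1)
      rw [pow_zero, one_mul] at e1
      rw [e1, IH 1 (S' + 1) (by omega) le_rfl (by omega),
        show 1 + (S' + 1) - 1 = S' + 1 from by omega, shift]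
      rw [show Finset.Icc 1 (0 + 1 + (S' + 1 + 1) - 1) = insert 1 (Finset.Icc 2 (S' + 1 + 1)) from by
        ext a; simp only [Finset.mem_Icc, Finset.mem_insert]; omega, Finset.sum_insert (by simp)]
      have h1 : (x-y)⁻¹ ^ 1 * pfC x y (0+1) (S'+1+1) 1 = (x-y)⁻¹ * y⁻¹ ^ (S'+1+1) := by
        simp [pfC, Nat.choose_eq_zero_of_lt (show 0 < S' + 1 from by omega)]
      have h2 : ∀ j ∈ Finset.Icc 2 (S' + 1 + 1), (x-y)⁻¹ ^ j * pfC x y (0+1) (S'+1+1) j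
          = -((x-y)⁻¹ ^ j * pfC x y 1 (S'+1) (j-1)) := by
        intro j hj
        simp only [Finset.mem_Icc] at hj
        obtain ⟨J, rfl⟩ : ∃ J, j = J + 2 := ⟨j - 2, by omega⟩
        have hc : (J+1).choose (S'+1) = J.choose S' := by
          rw [chtop (by omega), chtop (by omega)]
          simp only [Nat.add_right_cancel_iff]
        simp only [pfC, show J + 2 - 1 = J + 1 from rfl, show S' + 1 + 1 - 1 = S' + 1 from rfl,
          show (0:ℕ) + 1 - 1 = 0 from rfl, show S' + 1 - 1 = S' from rfl,
          show J + 1 - 1 = J from rfl, Nat.choose_zero_right,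
          show 0 + 1 + (S' + 1 + 1) - (J + 2) = S' + 1 - J from by omega,
          show 1 + (S' + 1) - (J + 1) = S' + 1 - J from by omega, hc]
        push_cast
        ring
      rw [h1, Finset.sum_congr rfl h2, Finset.sum_neg_distrib]
      ring
    · -- r = R+1, R ≥ 1, s = 1
      obtain ⟨R', rfl⟩ : ∃ R', R = R' + 1 := ⟨R - 1, by omega⟩
      have e1 := key (R' + 1) 0
      rw [pow_zero, mul_one] at e1
      rw [e1, IH (R' + 1) 1 (by omega) (by omega) le_rfl,
        show R' + 1 + 1 - 1 = R' + 1 from by omega, shift]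
      rw [show Finset.Icc 1 (R' + 1 + 1 + (0 + 1) - 1) = insert 1 (Finset.Icc 2 (R' + 1 + 1)) from by
        ext a; simp only [Finset.mem_Icc, Finset.mem_insert]; omega, Finset.sum_insert (by simp)]
      have h1 : (x-y)⁻¹ ^ 1 * pfC x y (R'+1+1) (0+1) 1 = -((x-y)⁻¹ * x⁻¹ ^ (R'+1+1)) := by
        simp [pfC, Nat.choose_eq_zero_of_lt (show 0 < R' + 1 from by omega)]
      have h2 : ∀ j ∈ Finset.Icc 2 (R' + 1 + 1), (x-y)⁻¹ ^ j * pfC x y (R'+1+1) (0+1) j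
          = (x-y)⁻¹ ^ j * pfC x y (R'+1) 1 (j-1) := by
        intro j hj
        simp only [Finset.mem_Icc] at hj
        obtain ⟨J, rfl⟩ : ∃ J, j = J + 2 := ⟨j - 2, by omega⟩
        have hc : (J+1).choose (R'+1) = J.choose R' := by
          rw [chtop (by omega), chtop (by omega)]
          simp only [Nat.add_right_cancel_iff]
        simp only [pfC, show J + 2 - 1 = J + 1 from rfl, show R' + 1 + 1 - 1 = R' + 1 from rfl,
          show (0:ℕ) + 1 - 1 = 0 from rfl, show R' + 1 - 1 = R' from rfl,
          show J + 1 - 1 = J from rfl, Nat.choose_zero_right,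
          show R' + 1 + 1 + (0 + 1) - (J + 2) = R' + 1 - J from by omega,
          show R' + 1 + 1 - (J + 1) = R' + 1 - J from by omega, hc]
        push_cast
        ring_nf
      rw [h1, Finset.sum_congr rfl h2]
      ring
    · -- r, s ≥ 2
      obtain ⟨R', rfl⟩ : ∃ R', R = R' + 1 := ⟨R - 1, by omega⟩
      obtain ⟨S', rfl⟩ : ∃ S', S = S' + 1 := ⟨S - 1, by omega⟩
      have e1 := key (R' + 1) (S' + 1)
      rw [e1, IH (R' + 1) (S' + 1 + 1) (by omega) (by omega) (by omega),
        IH (R' + 1 + 1) (S' + 1) (by omega) (by omega) (by omega),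
        show R' + 1 + (S' + 1 + 1) - 1 = R' + S' + 2 from by omega,
        show R' + 1 + 1 + (S' + 1) - 1 = R' + S' + 2 from by omega, shift, shift]
      rw [show Finset.Icc 1 (R' + 1 + 1 + (S' + 1 + 1) - 1) = insert 1 (Finset.Icc 2 (R' + S' + 2 + 1)) from by
        ext a; simp only [Finset.mem_Icc, Finset.mem_insert]; omega, Finset.sum_insert (by simp)]
      have h1 : (x-y)⁻¹ ^ 1 * pfC x y (R'+1+1) (S'+1+1) 1 = 0 := by
        simp [pfC, Nat.choose_eq_zero_of_lt (show 0 < R' + 1 from by omega),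
          Nat.choose_eq_zero_of_lt (show 0 < S' + 1 from by omega)]
      rw [h1, ← Finset.sum_sub_distrib]
      rw [zero_add]
      refine (Finset.sum_congr rfl ?_).symm
      intro j hj
      simp only [Finset.mem_Icc] at hj
      obtain ⟨J, rfl⟩ : ∃ J, j = J + 2 := ⟨j - 2, by omega⟩
      simp only [pfC, show J + 2 - 1 = J + 1 from rfl, show R' + 1 + 1 - 1 = R' + 1 from rfl,
        show S' + 1 + 1 - 1 = S' + 1 from rfl, show R' + 1 - 1 = R' from rfl,
        show S' + 1 - 1 = S' from rfl, show J + 1 - 1 = J from rfl,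
        show R' + 1 + 1 + (S' + 1 + 1) - (J + 2) = R' + S' + 2 - J from by omega,
        show R' + 1 + (S' + 1 + 1) - (J + 1) = R' + S' + 2 - J from by omega,
        show R' + 1 + 1 + (S' + 1) - (J + 1) = R' + S' + 2 - J from by omega,
        Nat.choose_succ_succ' (J+1)]
      rw [Nat.choose_succ_succ' J S', Nat.choose_succ_succ' J R']
      push_cast
      ring_nf

lemma deltaCast (r₁ s₁ j : ℕ) (hr : 1 ≤ r₁) (hs : 1 ≤ s₁) :
    ((-1:K)^s₁ * ((Nat.choose (j-1) (s₁-1)) : K)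
      + (-1:K)^j * ((-1:K)^(j+r₁) * ((Nat.choose (j-1) (r₁-1)) : K))) * (-1:K)
    = (((-1:ℤ)^(r₁-1) * (Nat.choose (j-1) (r₁-1) : ℤ)
        + (-1:ℤ)^(s₁-1) * (Nat.choose (j-1) (s₁-1) : ℤ) : ℤ) : K) := by
  obtain ⟨R, rfl⟩ : ∃ R, r₁ = R + 1 := ⟨r₁-1, by omega⟩
  obtain ⟨S, rfl⟩ : ∃ S, s₁ = S + 1 := ⟨s₁-1, by omega⟩
  have hj2 : (-1:K)^j * (-1:K)^j = 1 := by rw [← mul_pow]; norm_num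
  push_cast
  simp only [Nat.add_sub_cancel, pow_succ, pow_add]
  linear_combination ((-1:K)^R * ((Nat.choose (j-1) R : K))) * hj2

end PF

/-- Abstract `r`-shuffle base relation: let `𝕂` be an integral domain containing `𝔽_r`, with
a bracket `br` assigning to each polynomial of degree `< d₀` an element of `𝕂` such that
monic ones are units, `[a+b] = [a] + [b]`, and `[εa] = ε[a]`. Then for positive `r₁, s₁`
and `d < d₀`,
`H_d(r₁)·H_d(s₁) = H_d(r₁+s₁) + Σ_{i+j=r₁+s₁} Δ^{i,j}_{r₁,s₁} H_d(i,j)`, where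
`Δ^{i,j}_{r₁,s₁} = (−1)^{r₁−1}C(j−1,r₁−1) + (−1)^{s₁−1}C(j−1,s₁−1)` if `(r−1) ∣ j`, `j > 0`,
and `0` otherwise. -/
theorem stmt18 (Fq : Type*) [Field Fq] [Fintype Fq] {𝕂 : Type*} [CommRing 𝕂] [IsDomain 𝕂]
    [Algebra Fq 𝕂] (d₀ : ℕ) (br : Polynomial Fq → 𝕂)
    (hu : ∀ a : Polynomial Fq, a.Monic → a.natDegree < d₀ → IsUnit (br a))
    (hadd : ∀ a b : Polynomial Fq, a.natDegree < d₀ → b.natDegree < d₀ →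
      br (a + b) = br a + br b)
    (hsmul : ∀ (ε : Fq) (a : Polynomial Fq), a.natDegree < d₀ →
      br (Polynomial.C ε * a) = algebraMap Fq 𝕂 ε * br a)
    (r₁ s₁ : ℕ) (hr₁ : 0 < r₁) (hs₁ : 0 < s₁) (d : ℕ) (hd : d < d₀) :
    (∑ᶠ a ∈ {a : Polynomial Fq | a.Monic ∧ a.natDegree = d}, Ring.inverse (br a) ^ r₁) *
        (∑ᶠ b ∈ {b : Polynomial Fq | b.Monic ∧ b.natDegree = d}, Ring.inverse (br b) ^ s₁) =
      (∑ᶠ a ∈ {a : Polynomial Fq | a.Monic ∧ a.natDegree = d},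
          Ring.inverse (br a) ^ (r₁ + s₁)) +
        ∑ j ∈ Finset.range (r₁ + s₁ + 1),
          (((if (Fintype.card Fq - 1) ∣ j ∧ 0 < j then
                (-1 : ℤ) ^ (r₁ - 1) * Nat.choose (j - 1) (r₁ - 1) +
                  (-1 : ℤ) ^ (s₁ - 1) * Nat.choose (j - 1) (s₁ - 1)
              else 0) : ℤ) : 𝕂) *
            ∑ᶠ a ∈ {a : Polynomial Fq | a.Monic ∧ a.natDegree = d},
              ∑ᶠ f ∈ {f : Polynomial Fq | f.Monic ∧ f.natDegree < d},
                Ring.inverse (br a) ^ (r₁ + s₁ - j) * Ring.inverse (br f) ^ j := by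
  classical
  -- Finiteness of the index sets
  have hfin : ∀ n : ℕ, ({p : Polynomial Fq | p.Monic ∧ p.natDegree = n}).Finite := by
    intro n
    have h1 : Finite (Polynomial.degreeLT Fq n) :=
      Finite.of_equiv _ (Polynomial.degreeLTEquiv Fq n).toEquiv.symm
    have h2 : Finite {p : Polynomial Fq // p.Monic ∧ p.natDegree = n} :=
      Finite.of_equiv _ (Polynomial.monicEquivDegreeLT n).symm
    exact Set.finite_coe_iff.mp h2
  have hfinlt : ({p : Polynomial Fq | p.Monic ∧ p.natDegree < d}).Finite := by
    have hsub : {p : Polynomial Fq | p.Monic ∧ p.natDegree < d} ⊆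
        ⋃ e ∈ Finset.range d, {p : Polynomial Fq | p.Monic ∧ p.natDegree = e} := by
      intro p hp
      simp only [Set.mem_setOf_eq] at hp
      simp only [Set.mem_iUnion, Finset.mem_range, Set.mem_setOf_eq]
      exact ⟨p.natDegree, hp.2, hp.1, rfl⟩
    exact (Set.Finite.biUnion (Finset.range d).finite_toSet (fun e _ => hfin e)).subset hsub
  rw [← (hfin d).coe_toFinset, ← hfinlt.coe_toFinset]
  simp only [finsum_mem_coe_finset]
  set T : Finset (Polynomial Fq) := (hfin d).toFinset with hTdef
  set S : Finset (Polynomial Fq) := hfinlt.toFinset with hSdef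
  have hmemT : ∀ {p : Polynomial Fq}, p ∈ T ↔ p.Monic ∧ p.natDegree = d := by
    intro p; rw [hTdef, Set.Finite.mem_toFinset]; rfl
  have hmemS : ∀ {p : Polynomial Fq}, p ∈ S ↔ p.Monic ∧ p.natDegree < d := by
    intro p; rw [hSdef, Set.Finite.mem_toFinset]; rfl
  have hcardT : T.card = Fintype.card Fq ^ d := by
    have ecard : Nat.card {p : Polynomial Fq // p.Monic ∧ p.natDegree = d}
        = Fintype.card Fq ^ d := by
      rw [Nat.card_congr ((Polynomial.monicEquivDegreeLT d).trans
        (Polynomial.degreeLTEquiv Fq d).toEquiv)]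
      simp [Nat.card_eq_fintype_card]
    rw [hTdef, ← Set.ncard_eq_toFinset_card _ (hfin d), ← Nat.card_coe_set_eq, ← ecard]
    exact Nat.card_congr (Equiv.subtypeEquivRight (fun p => Iff.rfl))
  -- pass to the fraction field
  set K := FractionRing 𝕂 with hKdef
  set φ : 𝕂 →+* K := algebraMap 𝕂 K with hφdef
  have hφ : Function.Injective φ := IsFractionRing.injective 𝕂 K
  apply hφ
  simp only [map_mul, map_add, map_sum, map_pow, map_intCast]
  have hinv : ∀ p : Polynomial Fq, p.Monic → p.natDegree < d₀ →
      φ (Ring.inverse (br p)) = (φ (br p))⁻¹ := by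
    intro p h1 h2
    obtain ⟨w, hw⟩ := hu p h1 h2
    rw [← hw, Ring.inverse_unit]
    refine eq_inv_of_mul_eq_one_left ?_
    rw [← map_mul]
    simp
  have hinvT : ∀ p ∈ T, φ (Ring.inverse (br p)) = (φ (br p))⁻¹ := by
    intro p hp
    obtain ⟨h1, h2⟩ := hmemT.mp hp
    exact hinv p h1 (by omega)
  have hinvS : ∀ p ∈ S, φ (Ring.inverse (br p)) = (φ (br p))⁻¹ := by
    intro p hp
    obtain ⟨h1, h2⟩ := hmemS.mp hp
    exact hinv p h1 (by omega)
  have eT : ∀ m : ℕ, (∑ a ∈ T, φ (Ring.inverse (br a)) ^ m) = ∑ a ∈ T, ((φ (br a))⁻¹) ^ m :=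
    fun m => Finset.sum_congr rfl (fun a ha => by rw [hinvT a ha])
  have eTS : ∀ j ∈ Finset.range (r₁ + s₁ + 1),
      (((if (Fintype.card Fq - 1) ∣ j ∧ 0 < j then
          (-1 : ℤ) ^ (r₁ - 1) * Nat.choose (j - 1) (r₁ - 1) +
            (-1 : ℤ) ^ (s₁ - 1) * Nat.choose (j - 1) (s₁ - 1)
        else 0) : ℤ) : K) *
        (∑ a ∈ T, ∑ f ∈ S, φ (Ring.inverse (br a)) ^ (r₁ + s₁ - j)
          * φ (Ring.inverse (br f)) ^ j)
      = (((if (Fintype.card Fq - 1) ∣ j ∧ 0 < j then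
          (-1 : ℤ) ^ (r₁ - 1) * Nat.choose (j - 1) (r₁ - 1) +
            (-1 : ℤ) ^ (s₁ - 1) * Nat.choose (j - 1) (s₁ - 1)
        else 0) : ℤ) : K) *
        (∑ a ∈ T, ∑ f ∈ S, ((φ (br a))⁻¹) ^ (r₁ + s₁ - j) * ((φ (br f))⁻¹) ^ j) := by
    intro j _
    congr 1
    refine Finset.sum_congr rfl (fun a ha => Finset.sum_congr rfl (fun f hf => ?_))
    rw [hinvT a ha, hinvS f hf]
  rw [eT r₁, eT s₁, eT (r₁ + s₁), Finset.sum_congr rfl eTS]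
  -- basic nonvanishing facts
  have hvT : ∀ a ∈ T, φ (br a) ≠ 0 := by
    intro a ha h
    obtain ⟨h1, h2⟩ := hmemT.mp ha
    exact ((hu a h1 (by omega)).ne_zero) (hφ (by rw [map_zero]; exact h))
  have hψne : ∀ ε : Fq, ε ≠ 0 → φ (algebraMap Fq 𝕂 ε) ≠ 0 := by
    intro ε hε0 h
    have h2 : algebraMap Fq 𝕂 ε = 0 := hφ (by rw [map_zero]; exact h)
    exact hε0 ((map_eq_zero_iff _ (algebraMap Fq 𝕂).injective).mp h2)
  -- arithmetic of br on differences
  have hsubne : ∀ a ∈ T, ∀ b ∈ T.erase a, a - b ≠ 0 := by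
    intro a _ b hb
    exact sub_ne_zero.mpr (Ne.symm (Finset.mem_erase.mp hb).1)
  have hsubdeg : ∀ a ∈ T, ∀ b ∈ T.erase a, (a - b).natDegree < d := by
    intro a ha b hb
    obtain ⟨haM, haD⟩ := hmemT.mp ha
    obtain ⟨hbM, hbD⟩ := hmemT.mp (Finset.mem_of_mem_erase hb)
    have hdlt : (a - b).degree < a.degree := by
      refine Polynomial.degree_sub_lt ?_ haM.ne_zero ?_
      · rw [Polynomial.degree_eq_natDegree haM.ne_zero,
          Polynomial.degree_eq_natDegree hbM.ne_zero, haD, hbD]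
      · rw [haM.leadingCoeff, hbM.leadingCoeff]
    have hadeg : a.degree = (d : WithBot ℕ) := by
      rw [Polynomial.degree_eq_natDegree haM.ne_zero, haD]
    exact (Polynomial.natDegree_lt_iff_degree_lt (hsubne a ha b hb)).mpr (hadeg ▸ hdlt)
  have hnorm : ∀ g : Polynomial Fq, g ≠ 0 → g.natDegree < d →
      (Polynomial.C g.leadingCoeff⁻¹ * g) ∈ S := by
    intro g hg hgd
    refine hmemS.mpr ⟨?_, ?_⟩
    · rw [mul_comm]
      exact Polynomial.monic_mul_leadingCoeff_inv hg
    · rwa [Polynomial.natDegree_C_mul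
        (inv_ne_zero (Polynomial.leadingCoeff_ne_zero.mpr hg))]
  have hbrfac : ∀ g : Polynomial Fq, g ≠ 0 → g.natDegree < d →
      br g = algebraMap Fq 𝕂 g.leadingCoeff * br (Polynomial.C g.leadingCoeff⁻¹ * g) := by
    intro g hg hgd
    rw [← hsmul _ _ (lt_of_le_of_lt (Polynomial.natDegree_C_mul_le _ _) (hgd.trans hd))]
    congr 1
    rw [← mul_assoc, ← Polynomial.C_mul,
      mul_inv_cancel₀ (Polynomial.leadingCoeff_ne_zero.mpr hg), Polynomial.C_1, one_mul]
  have hbr0 : ∀ g : Polynomial Fq, g ≠ 0 → g.natDegree < d → br g ≠ 0 := by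
    intro g hg hgd
    rw [hbrfac g hg hgd]
    refine mul_ne_zero (fun h => (Polynomial.leadingCoeff_ne_zero.mpr hg)
      ((map_eq_zero_iff _ (algebraMap Fq 𝕂).injective).mp h)) ?_
    obtain ⟨h1, h2⟩ := hmemS.mp (hnorm g hg hgd)
    exact (hu _ h1 (by omega)).ne_zero
  have hbrsub : ∀ a ∈ T, ∀ b ∈ T.erase a, br a = br b + br (a - b) := by
    intro a ha b hb
    obtain ⟨hbM, hbD⟩ := hmemT.mp (Finset.mem_of_mem_erase hb)
    have e : b + (a - b) = a := by ring
    conv_lhs => rw [← e]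
    exact hadd _ _ (by omega) (by have := hsubdeg a ha b hb; omega)
  have hvne : ∀ a ∈ T, ∀ b ∈ T.erase a, φ (br a) ≠ φ (br b) := by
    intro a ha b hb h
    have h2 : br a = br b := hφ h
    have h3 : br (a - b) = 0 := by
      have h4 := hbrsub a ha b hb
      rw [h2] at h4
      exact (left_eq_add.mp h4)
    exact hbr0 _ (hsubne a ha b hb) (hsubdeg a ha b hb) h3
  -- the reindexing bijection b ↔ (ε, f)
  set E : Finset Fq := Finset.univ.erase 0 with hEdef
  have hbmem : ∀ a ∈ T, ∀ ε ∈ E, ∀ f ∈ S, (a - Polynomial.C ε * f) ∈ T.erase a := by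
    intro a ha ε hε f hf
    obtain ⟨haM, haD⟩ := hmemT.mp ha
    obtain ⟨hfM, hfD⟩ := hmemS.mp hf
    have hε0 : ε ≠ 0 := (Finset.mem_erase.mp hε).1
    have hdeg : (Polynomial.C ε * f).degree < a.degree := by
      rw [Polynomial.degree_C_mul hε0, Polynomial.degree_eq_natDegree hfM.ne_zero,
        Polynomial.degree_eq_natDegree haM.ne_zero]
      exact_mod_cast haD ▸ hfD
    have hM : (a - Polynomial.C ε * f).Monic := by
      have := haM.add_of_left (q := -(Polynomial.C ε * f)) (by rwa [Polynomial.degree_neg])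
      simpa [sub_eq_add_neg] using this
    have hD : (a - Polynomial.C ε * f).natDegree = d := by
      rw [← haD]
      exact Polynomial.natDegree_eq_of_degree_eq (Polynomial.degree_sub_eq_left_of_degree_lt hdeg)
    refine Finset.mem_erase.mpr ⟨?_, hmemT.mpr ⟨hM, hD⟩⟩
    intro h
    rcases mul_eq_zero.mp (sub_eq_self.mp h) with h' | h'
    · exact hε0 (Polynomial.C_eq_zero.mp h')
    · exact hfM.ne_zero h'
  have hreidx : ∀ a ∈ T, ∀ G : Polynomial Fq → K,
      (∑ b ∈ T.erase a, G b) = ∑ ε ∈ E, ∑ f ∈ S, G (a - Polynomial.C ε * f) := by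
    intro a ha G
    rw [← Finset.sum_product']
    refine Finset.sum_nbij'
      (i := fun b => ((a - b).leadingCoeff, Polynomial.C ((a - b).leadingCoeff)⁻¹ * (a - b)))
      (j := fun p => a - Polynomial.C p.1 * p.2) ?_ ?_ ?_ ?_ ?_
    · intro b hb
      refine Finset.mem_product.mpr ⟨?_, hnorm _ (hsubne a ha b hb) (hsubdeg a ha b hb)⟩
      exact Finset.mem_erase.mpr ⟨Polynomial.leadingCoeff_ne_zero.mpr (hsubne a ha b hb),
        Finset.mem_univ _⟩
    · intro p hp
      obtain ⟨h1, h2⟩ := Finset.mem_product.mp hp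
      exact hbmem a ha p.1 h1 p.2 h2
    · intro b hb
      simp only
      rw [← mul_assoc, ← Polynomial.C_mul,
        mul_inv_cancel₀ (Polynomial.leadingCoeff_ne_zero.mpr (hsubne a ha b hb)),
        Polynomial.C_1, one_mul, sub_sub_cancel]
    · intro p hp
      obtain ⟨h1, h2⟩ := Finset.mem_product.mp hp
      obtain ⟨hfM, hfD⟩ := hmemS.mp h2
      have hε0 : p.1 ≠ 0 := (Finset.mem_erase.mp h1).1
      have hlc : (a - (a - Polynomial.C p.1 * p.2)).leadingCoeff = p.1 := by
        rw [sub_sub_cancel, Polynomial.leadingCoeff_mul, Polynomial.leadingCoeff_C,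
          hfM.leadingCoeff, mul_one]
      have : a - (a - Polynomial.C p.1 * p.2) = Polynomial.C p.1 * p.2 := sub_sub_cancel a _
      refine Prod.ext ?_ ?_
      · simpa using hlc
      · show Polynomial.C ((a - (a - Polynomial.C p.1 * p.2)).leadingCoeff)⁻¹
            * (a - (a - Polynomial.C p.1 * p.2)) = p.2
        rw [hlc, this, ← mul_assoc, ← Polynomial.C_mul, inv_mul_cancel₀ hε0,
          Polynomial.C_1, one_mul]
    · intro b hb
      simp only
      rw [← mul_assoc, ← Polynomial.C_mul,
        mul_inv_cancel₀ (Polynomial.leadingCoeff_ne_zero.mpr (hsubne a ha b hb)),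
        Polynomial.C_1, one_mul, sub_sub_cancel]
  -- effect of the bijection on values of v
  have hvsub : ∀ a ∈ T, ∀ ε ∈ E, ∀ f ∈ S,
      φ (br (a - Polynomial.C ε * f))
        = φ (br a) - φ (algebraMap Fq 𝕂 ε) * φ (br f) := by
    intro a ha ε hε f hf
    obtain ⟨hfM, hfD⟩ := hmemS.mp hf
    have hb := hbmem a ha ε hε f hf
    obtain ⟨hbM, hbD⟩ := hmemT.mp (Finset.mem_of_mem_erase hb)
    have h1 : br a = br (a - Polynomial.C ε * f) + br (Polynomial.C ε * f) := by
      conv_lhs => rw [show a = (a - Polynomial.C ε * f) + Polynomial.C ε * f from by ring]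
      exact hadd _ _ (by omega)
        (lt_of_le_of_lt (Polynomial.natDegree_C_mul_le _ _) (by omega))
    have h2 : br (Polynomial.C ε * f) = algebraMap Fq 𝕂 ε * br f := hsmul ε f (by omega)
    have h3 : br (a - Polynomial.C ε * f) = br a - algebraMap Fq 𝕂 ε * br f := by
      rw [h2] at h1
      exact eq_sub_of_add_eq h1.symm
    rw [h3, map_sub, map_mul]
  -- the character sum
  have charSum : ∀ j : ℕ, (∑ ε ∈ E, (φ (algebraMap Fq 𝕂 ε))⁻¹ ^ j)
      = if (Fintype.card Fq - 1) ∣ j then (-1 : K) else 0 := by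
    intro j
    set ψc : Fq →+* K := φ.comp (algebraMap Fq 𝕂) with hψc
    have hstep : ∀ ε : Fq, φ (algebraMap Fq 𝕂 ε) = ψc ε := fun ε => rfl
    simp only [hstep]
    have hEunits : ∀ g : Fq → K, ∑ ε ∈ E, g ε = ∑ x : Fqˣ, g (x : Fq) := by
      intro g
      refine (Finset.sum_nbij' (i := fun (x : Fqˣ) => (x : Fq))
        (j := fun ε => if h : ε = (0:Fq) then 1 else Units.mk0 ε h) ?_ ?_ ?_ ?_ ?_).symm
      · intro x _; exact Finset.mem_erase.mpr ⟨Units.ne_zero x, Finset.mem_univ _⟩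
      · intro ε _; exact Finset.mem_univ _
      · intro x _
        show (if h : (x : Fq) = (0:Fq) then (1:Fqˣ) else Units.mk0 _ h) = x
        rw [dif_neg (Units.ne_zero x)]
        exact Units.ext rfl
      · intro ε hε
        show Units.val (if h : ε = (0:Fq) then (1:Fqˣ) else Units.mk0 ε h) = ε
        rw [dif_neg (Finset.mem_erase.mp hε).1]
        rfl
      · intro x _; rfl
    rw [hEunits (fun ε => (ψc ε)⁻¹ ^ j)]
    have h2 : ∀ x : Fqˣ, ((ψc ((x : Fq)))⁻¹) ^ j = ψc ((((x ^ j)⁻¹ : Fqˣ)) : Fq) := by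
      intro x
      rw [Units.val_inv_eq_inv_val, map_inv₀, Units.val_pow_eq_pow_val, map_pow]
      exact inv_pow _ _
    simp only [h2]
    have h3 : ∀ x : Fqˣ, (((x ^ j)⁻¹ : Fqˣ) : Fq) = (((x⁻¹ : Fqˣ) ^ j : Fqˣ) : Fq) := by
      intro x; rw [inv_pow]
    simp only [h3]
    have h5 : (∑ x : Fqˣ, ψc ((((x⁻¹ : Fqˣ) ^ j : Fqˣ)) : Fq))
        = ∑ x : Fqˣ, ψc (((x ^ j : Fqˣ)) : Fq) :=
      Fintype.sum_equiv (Equiv.inv Fqˣ) _ _ (fun x => rfl)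
    rw [h5, ← map_sum]
    have h4 : (∑ x : Fqˣ, (((x ^ j : Fqˣ)) : Fq))
        = if (Fintype.card Fq - 1) ∣ j then (-1 : Fq) else 0 := by
      have := FiniteField.sum_pow_units Fq j
      simpa [Units.val_pow_eq_pow_val] using this
    rw [h4]
    split_ifs <;> simp
  -- swapping the roles of a and b in the double sum
  have hswap : ∀ (h : Polynomial Fq → Polynomial Fq → K),
      ∑ a ∈ T, ∑ b ∈ T.erase a, h a b = ∑ a ∈ T, ∑ b ∈ T.erase a, h b a := by
    intro h
    rw [Finset.sum_sigma' T (fun a => T.erase a) (fun a b => h a b),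
      Finset.sum_sigma' T (fun a => T.erase a) (fun a b => h b a)]
    refine Finset.sum_nbij' (i := fun x => ⟨x.2, x.1⟩) (j := fun x => ⟨x.2, x.1⟩) ?_ ?_ ?_ ?_ ?_
    · intro x hx
      obtain ⟨h1, h2⟩ := Finset.mem_sigma.mp hx
      exact Finset.mem_sigma.mpr ⟨Finset.mem_of_mem_erase h2,
        Finset.mem_erase.mpr ⟨Ne.symm (Finset.mem_erase.mp h2).1, h1⟩⟩
    · intro x hx
      obtain ⟨h1, h2⟩ := Finset.mem_sigma.mp hx
      exact Finset.mem_sigma.mpr ⟨Finset.mem_of_mem_erase h2,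
        Finset.mem_erase.mpr ⟨Ne.symm (Finset.mem_erase.mp h2).1, h1⟩⟩
    · intro x _; rfl
    · intro x _; rfl
    · intro x _; rfl
  -- vanishing of (q^d : K) for d ≥ 1
  have hq0K : ((Fintype.card Fq : ℕ) : K) = 0 := by
    have h1 : ((Fintype.card Fq : ℕ) : Fq) = 0 := FiniteField.cast_card_eq_zero Fq
    have h2 : ((Fintype.card Fq : ℕ) : K) = φ (algebraMap Fq 𝕂 ((Fintype.card Fq : ℕ) : Fq)) := by
      rw [map_natCast, map_natCast]
    rw [h2, h1, map_zero, map_zero]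
  -- main computation
  have step1 : (∑ a ∈ T, ((φ (br a))⁻¹) ^ r₁) * (∑ b ∈ T, ((φ (br b))⁻¹) ^ s₁)
      = (∑ a ∈ T, ((φ (br a))⁻¹) ^ (r₁ + s₁))
        + ∑ a ∈ T, ∑ b ∈ T.erase a, ((φ (br a))⁻¹) ^ r₁ * ((φ (br b))⁻¹) ^ s₁ := by
    rw [Finset.sum_mul_sum]
    have h1 : ∀ a ∈ T, (∑ b ∈ T, ((φ (br a))⁻¹) ^ r₁ * ((φ (br b))⁻¹) ^ s₁)
        = ((φ (br a))⁻¹) ^ (r₁ + s₁)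
          + ∑ b ∈ T.erase a, ((φ (br a))⁻¹) ^ r₁ * ((φ (br b))⁻¹) ^ s₁ := by
      intro a ha
      rw [← Finset.add_sum_erase T _ ha, ← pow_add]
    rw [Finset.sum_congr rfl h1, Finset.sum_add_distrib]
  have stepA : ∑ a ∈ T, ∑ b ∈ T.erase a, ((φ (br a))⁻¹) ^ r₁ * ((φ (br b))⁻¹) ^ s₁
      = ∑ j ∈ Finset.Icc 1 (r₁ + s₁ - 1), ∑ a ∈ T, ∑ b ∈ T.erase a,
          (φ (br a) - φ (br b))⁻¹ ^ j * pfC (φ (br a)) (φ (br b)) r₁ s₁ j := by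
    calc ∑ a ∈ T, ∑ b ∈ T.erase a, ((φ (br a))⁻¹) ^ r₁ * ((φ (br b))⁻¹) ^ s₁
        = ∑ a ∈ T, ∑ b ∈ T.erase a, ∑ j ∈ Finset.Icc 1 (r₁ + s₁ - 1),
            (φ (br a) - φ (br b))⁻¹ ^ j * pfC (φ (br a)) (φ (br b)) r₁ s₁ j :=
          Finset.sum_congr rfl (fun a ha => Finset.sum_congr rfl (fun b hb =>
            pfrac (hvT a ha) (hvT b (Finset.mem_of_mem_erase hb)) (hvne a ha b hb)
              (r₁ + s₁) r₁ s₁ rfl hr₁ hs₁))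
      _ = ∑ a ∈ T, ∑ j ∈ Finset.Icc 1 (r₁ + s₁ - 1), ∑ b ∈ T.erase a,
            (φ (br a) - φ (br b))⁻¹ ^ j * pfC (φ (br a)) (φ (br b)) r₁ s₁ j :=
          Finset.sum_congr rfl (fun a _ => Finset.sum_comm)
      _ = _ := Finset.sum_comm
  have stepB : ∀ j ∈ Finset.Icc 1 (r₁ + s₁ - 1),
      (∑ a ∈ T, ∑ b ∈ T.erase a,
        (φ (br a) - φ (br b))⁻¹ ^ j * pfC (φ (br a)) (φ (br b)) r₁ s₁ j)
      = (((if (Fintype.card Fq - 1) ∣ j ∧ 0 < j then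
            (-1 : ℤ) ^ (r₁ - 1) * Nat.choose (j - 1) (r₁ - 1) +
              (-1 : ℤ) ^ (s₁ - 1) * Nat.choose (j - 1) (s₁ - 1)
          else 0) : ℤ) : K) *
          (∑ a ∈ T, ∑ f ∈ S, ((φ (br a))⁻¹) ^ (r₁ + s₁ - j) * ((φ (br f))⁻¹) ^ j) := by
    intro j hj
    simp only [Finset.mem_Icc] at hj
    set c₁ : K := (-1:K)^s₁ * ((Nat.choose (j-1) (s₁-1)) : K) with hc₁
    set c₂ : K := (-1:K)^(j+r₁) * ((Nat.choose (j-1) (r₁-1)) : K) with hc₂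
    set P : K := ∑ a ∈ T, ∑ b ∈ T.erase a,
      (φ (br a) - φ (br b))⁻¹ ^ j * ((φ (br a))⁻¹) ^ (r₁ + s₁ - j) with hP
    set D : K := ∑ a ∈ T, ∑ f ∈ S,
      ((φ (br a))⁻¹) ^ (r₁ + s₁ - j) * ((φ (br f))⁻¹) ^ j with hD
    have hone : ∀ a ∈ T, ∀ b ∈ T.erase a,
        (φ (br a) - φ (br b))⁻¹ ^ j * pfC (φ (br a)) (φ (br b)) r₁ s₁ j
        = c₁ * ((φ (br a) - φ (br b))⁻¹ ^ j * ((φ (br a))⁻¹) ^ (r₁ + s₁ - j))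
          + c₂ * ((φ (br a) - φ (br b))⁻¹ ^ j * ((φ (br b))⁻¹) ^ (r₁ + s₁ - j)) := by
      intro a _ b _
      simp only [pfC, hc₁, hc₂]
      ring
    have hY : (∑ a ∈ T, ∑ b ∈ T.erase a,
        (φ (br a) - φ (br b))⁻¹ ^ j * ((φ (br b))⁻¹) ^ (r₁ + s₁ - j))
        = (-1:K)^j * P := by
      rw [hswap (fun a b => (φ (br a) - φ (br b))⁻¹ ^ j * ((φ (br b))⁻¹) ^ (r₁ + s₁ - j))]
      have hpt : ∀ a ∈ T, ∀ b ∈ T.erase a,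
          (φ (br b) - φ (br a))⁻¹ ^ j * ((φ (br a))⁻¹) ^ (r₁ + s₁ - j)
          = (-1:K)^j * ((φ (br a) - φ (br b))⁻¹ ^ j * ((φ (br a))⁻¹) ^ (r₁ + s₁ - j)) := by
        intro a _ b _
        rw [show φ (br b) - φ (br a) = -(φ (br a) - φ (br b)) from by ring, inv_neg, neg_pow]
        ring
      rw [Finset.sum_congr rfl (fun a ha => Finset.sum_congr rfl (hpt a ha))]
      simp only [← Finset.mul_sum]
      rw [hP]
    have hP2 : P = (if (Fintype.card Fq - 1) ∣ j then (-1:K) else 0) * D := by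
      have hper : ∀ a ∈ T, (∑ b ∈ T.erase a,
          (φ (br a) - φ (br b))⁻¹ ^ j * ((φ (br a))⁻¹) ^ (r₁ + s₁ - j))
          = (if (Fintype.card Fq - 1) ∣ j then (-1:K) else 0)
            * ∑ f ∈ S, ((φ (br a))⁻¹) ^ (r₁ + s₁ - j) * ((φ (br f))⁻¹) ^ j := by
        intro a ha
        calc (∑ b ∈ T.erase a,
            (φ (br a) - φ (br b))⁻¹ ^ j * ((φ (br a))⁻¹) ^ (r₁ + s₁ - j))
            = ∑ ε ∈ E, ∑ f ∈ S,
              (φ (br a) - φ (br (a - Polynomial.C ε * f)))⁻¹ ^ j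
                * ((φ (br a))⁻¹) ^ (r₁ + s₁ - j) :=
              hreidx a ha _
          _ = ∑ ε ∈ E, ∑ f ∈ S, ((φ (algebraMap Fq 𝕂 ε))⁻¹ ^ j)
                * (((φ (br a))⁻¹) ^ (r₁ + s₁ - j) * ((φ (br f))⁻¹) ^ j) := by
              refine Finset.sum_congr rfl (fun ε hε => Finset.sum_congr rfl (fun f hf => ?_))
              rw [hvsub a ha ε hε f hf, sub_sub_cancel, mul_inv]
              ring
          _ = (∑ ε ∈ E, (φ (algebraMap Fq 𝕂 ε))⁻¹ ^ j)
                * ∑ f ∈ S, ((φ (br a))⁻¹) ^ (r₁ + s₁ - j) * ((φ (br f))⁻¹) ^ j :=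
              (Finset.sum_mul_sum E S _ _).symm
          _ = _ := by rw [charSum j]
      rw [hP, Finset.sum_congr rfl hper, hD, ← Finset.mul_sum]
    have hcoeff : (c₁ + (-1:K)^j * c₂) * (if (Fintype.card Fq - 1) ∣ j then (-1:K) else 0)
        = (((if (Fintype.card Fq - 1) ∣ j ∧ 0 < j then
            (-1 : ℤ) ^ (r₁ - 1) * Nat.choose (j - 1) (r₁ - 1) +
              (-1 : ℤ) ^ (s₁ - 1) * Nat.choose (j - 1) (s₁ - 1)
          else 0) : ℤ) : K) := by
      by_cases hdvd : (Fintype.card Fq - 1) ∣ j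
      · rw [if_pos hdvd, if_pos ⟨hdvd, by omega⟩, hc₁, hc₂]
        exact deltaCast r₁ s₁ j hr₁ hs₁
      · rw [if_neg hdvd, if_neg (fun h => hdvd h.1), mul_zero, Int.cast_zero]
    calc (∑ a ∈ T, ∑ b ∈ T.erase a,
        (φ (br a) - φ (br b))⁻¹ ^ j * pfC (φ (br a)) (φ (br b)) r₁ s₁ j)
        = ∑ a ∈ T, ∑ b ∈ T.erase a,
            (c₁ * ((φ (br a) - φ (br b))⁻¹ ^ j * ((φ (br a))⁻¹) ^ (r₁ + s₁ - j))
            + c₂ * ((φ (br a) - φ (br b))⁻¹ ^ j * ((φ (br b))⁻¹) ^ (r₁ + s₁ - j))) :=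
          Finset.sum_congr rfl (fun a ha => Finset.sum_congr rfl (hone a ha))
      _ = c₁ * P + c₂ * ((-1:K)^j * P) := by
          simp only [Finset.sum_add_distrib, ← Finset.mul_sum]
          rw [hY, hP]
      _ = (c₁ + (-1:K)^j * c₂) * P := by ring
      _ = (c₁ + (-1:K)^j * c₂) * ((if (Fintype.card Fq - 1) ∣ j then (-1:K) else 0) * D) := by
          rw [hP2]
      _ = _ := by rw [← mul_assoc, hcoeff]
  have stepC : (∑ j ∈ Finset.Icc 1 (r₁ + s₁ - 1),
      (((if (Fintype.card Fq - 1) ∣ j ∧ 0 < j then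
            (-1 : ℤ) ^ (r₁ - 1) * Nat.choose (j - 1) (r₁ - 1) +
              (-1 : ℤ) ^ (s₁ - 1) * Nat.choose (j - 1) (s₁ - 1)
          else 0) : ℤ) : K) *
          (∑ a ∈ T, ∑ f ∈ S, ((φ (br a))⁻¹) ^ (r₁ + s₁ - j) * ((φ (br f))⁻¹) ^ j))
      = ∑ j ∈ Finset.range (r₁ + s₁ + 1),
      (((if (Fintype.card Fq - 1) ∣ j ∧ 0 < j then
            (-1 : ℤ) ^ (r₁ - 1) * Nat.choose (j - 1) (r₁ - 1) +
              (-1 : ℤ) ^ (s₁ - 1) * Nat.choose (j - 1) (s₁ - 1)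
          else 0) : ℤ) : K) *
          (∑ a ∈ T, ∑ f ∈ S, ((φ (br a))⁻¹) ^ (r₁ + s₁ - j) * ((φ (br f))⁻¹) ^ j) := by
    refine Finset.sum_subset ?_ ?_
    · intro x hx
      simp only [Finset.mem_Icc] at hx
      simp only [Finset.mem_range]
      omega
    · intro j hjr hji
      simp only [Finset.mem_range] at hjr
      simp only [Finset.mem_Icc, not_and_or, not_le] at hji
      have hcase : j = 0 ∨ j = r₁ + s₁ := by omega
      rcases hcase with rfl | rfl
      · rw [if_neg (by simp), Int.cast_zero, zero_mul]
      · rcases Nat.eq_zero_or_pos d with rfl | hdpos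
        · have hSempty : S = ∅ := by
            refine Finset.eq_empty_of_forall_notMem (fun f hf => ?_)
            have := (hmemS.mp hf).2
            omega
          rw [hSempty]
          simp
        · have hTzero : ((T.card : ℕ) : K) = 0 := by
            rw [hcardT]
            push_cast
            rw [hq0K, zero_pow (by omega)]
          have hDn : (∑ a ∈ T, ∑ f ∈ S,
              ((φ (br a))⁻¹) ^ (r₁ + s₁ - (r₁ + s₁)) * ((φ (br f))⁻¹) ^ (r₁ + s₁)) = 0 := by
            rw [Nat.sub_self]
            simp only [pow_zero, one_mul]
            rw [Finset.sum_const, nsmul_eq_mul, hTzero, zero_mul]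
          rw [hDn, mul_zero]
  rw [step1, stepA, Finset.sum_congr rfl stepB, stepC]
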